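/- With Π_N the fourth-order Taylor regularization of Π(s) = s·ln s at 1/N and π_N = Π_N', for any fixed u ∈ (0,1) there exist constants d₂ > 0 and d₃ ≥ 0 depending only on u such that for all sufficiently large N and all s ∈ ℝ, |π_N(s)| ≤ d₂·π_N(s)·(s − u) + d₃. -/

import Mathlib

/-- π_N = Π_N', the derivative of the fourth-order Taylor regularization of
Π(s) = s ln s at 1/N. -/
noncomputable def piN (N : ℕ) (s : ℝ) : ℝ :=
  if (1 : ℝ) / (N : ℝ) ≤ s then 1 + Real.log s
  else 1 + Real.log (1 / (N : ℝ))
    + (N : ℝ) * (s - 1 / (N : ℝ))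
    - ((N : ℝ)^2 / 2) * (s - 1 / (N : ℝ))^2
    + ((N : ℝ)^3 / 3) * (s - 1 / (N : ℝ))^3

lemma piN_nonpos_of_lt (N : ℕ) (hN : 3 ≤ N) (s : ℝ) (h : s < 1 / (N : ℝ)) :
    piN N s ≤ 0 := by
  have hN0 : (0:ℝ) < (N:ℝ) := by positivity
  have hN3 : (3:ℝ) ≤ (N:ℝ) := by exact_mod_cast hN
  rw [piN, if_neg (not_le.mpr h)]
  obtain ⟨t, ht⟩ : ∃ t : ℝ, s - 1 / (N:ℝ) = t := ⟨_, rfl⟩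
  rw [ht]
  have htneg : t < 0 := by rw [← ht]; linarith
  have hlog : Real.log (1 / (N:ℝ)) = - Real.log (N:ℝ) := by
    rw [one_div, Real.log_inv]
  have hlog3 : (1:ℝ) ≤ Real.log 3 := by
    rw [Real.le_log_iff_exp_le (by norm_num)]
    have := Real.exp_one_lt_d9
    linarith
  have hlogN : (1:ℝ) ≤ Real.log (N:ℝ) := by
    have := Real.log_le_log (by norm_num : (0:ℝ) < 3) hN3
    linarith
  have h1 : (N:ℝ) * t ≤ 0 := mul_nonpos_of_nonneg_of_nonpos hN0.le htneg.le
  have h2 : ((N:ℝ)^2 / 2) * t^2 ≥ 0 := by positivity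
  have h3 : ((N:ℝ)^3 / 3) * t^3 ≤ 0 := by
    apply mul_nonpos_of_nonneg_of_nonpos (by positivity)
    nlinarith [sq_nonneg t]
  rw [hlog]
  linarith

set_option maxHeartbeats 1000000 in
/-- For any u ∈ (0,1) there are d₂ > 0, d₃ ≥ 0 depending only on u such that for
all sufficiently large N and all s ∈ ℝ, |π_N(s)| ≤ d₂·π_N(s)·(s − u) + d₃. -/
theorem stmt_3 :
    ∀ u : ℝ, u ∈ Set.Ioo (0 : ℝ) 1 →
      ∃ d₂ : ℝ, 0 < d₂ ∧ ∃ d₃ : ℝ, 0 ≤ d₃ ∧ ∃ N₀ : ℕ,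
        ∀ N : ℕ, N₀ ≤ N → ∀ s : ℝ,
          |piN N s| ≤ d₂ * (piN N s * (s - u)) + d₃ := by
  rintro u ⟨hu0, hu1⟩
  set E := Real.exp 1 with hE
  have hE2 : (2:ℝ) < E := by have := Real.exp_one_gt_d9; linarith
  have hE3 : E < 3 := by have := Real.exp_one_lt_d9; linarith
  set L := Real.log (2 / u) with hLdef
  have hL : (0:ℝ) ≤ L := Real.log_nonneg (by rw [le_div_iff₀ hu0]; linarith)
  set C : ℝ := 2 + L with hCdef
  have hC : (0:ℝ) ≤ C := by linarith
  set d₂ : ℝ := 2 / u with hd2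
  have hd2pos : 0 < d₂ := by positivity
  refine ⟨d₂, hd2pos, C * (1 + d₂ * E) + 3, by positivity, max 3 ⌈(2:ℝ)/u⌉₊, ?_⟩
  intro N hN s
  have hN3 : 3 ≤ N := le_trans (le_max_left _ _) hN
  have hNceil : ⌈(2:ℝ)/u⌉₊ ≤ N := le_trans (le_max_right _ _) hN
  have hNu : (2:ℝ)/u ≤ (N:ℝ) := by
    have := Nat.ceil_le.mp hNceil
    exact_mod_cast this
  have hN0 : (0:ℝ) < (N:ℝ) := by
    have : (3:ℝ) ≤ (N:ℝ) := by exact_mod_cast hN3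
    linarith
  have hinv : 1 / (N:ℝ) ≤ u / 2 := by
    rw [div_le_div_iff₀ hN0 (by norm_num)]
    have h := mul_le_mul_of_nonneg_right hNu hu0.le
    have h2 : (2/u)*u = 2 := by field_simp
    nlinarith
  obtain ⟨p, hp⟩ : ∃ p : ℝ, piN N s = p := ⟨_, rfl⟩
  rw [hp]
  rcases le_or_gt E s with hA | hA
  · -- s ≥ e
    have hle : 1 / (N:ℝ) ≤ s := by linarith
    have hps : p = 1 + Real.log s := by rw [← hp, piN, if_pos hle]
    have hlogs : (1:ℝ) ≤ Real.log s := by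
      rw [Real.le_log_iff_exp_le (by linarith)]; exact hA
    have hppos : (0:ℝ) ≤ p := by rw [hps]; linarith
    have habs : |p| = p := abs_of_nonneg hppos
    have hkey : (1:ℝ) ≤ d₂ * (s - u) := by
      rw [hd2]
      have h1 : s - u ≥ 1 := by linarith
      rw [div_mul_eq_mul_div, le_div_iff₀ hu0]
      nlinarith
    rw [habs]
    nlinarith [mul_le_mul_of_nonneg_left hkey hppos, mul_nonneg hC (by positivity : (0:ℝ) ≤ d₂ * E)]
  · rcases le_or_gt s (u/2) with hB | hB
    · -- s ≤ u/2
      have hsu : u - s ≥ u / 2 := by linarith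
      rcases lt_or_ge s (1/(N:ℝ)) with hlt | hle
      · -- polynomial region: p ≤ 0
        have hpneg : p ≤ 0 := hp ▸ piN_nonpos_of_lt N hN3 s hlt
        have habs : |p| = -p := abs_of_nonpos hpneg
        rw [habs, hd2]
        have key : (2/u) * (p * (s - u)) ≥ -p := by
          have h1 : p * (s - u) = (-p) * (u - s) := by ring
          rw [h1]
          have h2 : (-p) * (u - s) ≥ (-p) * (u/2) :=
            mul_le_mul_of_nonneg_left hsu (by linarith)
          calc (2/u) * ((-p) * (u - s)) ≥ (2/u) * ((-p) * (u/2)) := by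
                apply mul_le_mul_of_nonneg_left h2 (by positivity)
          _ = -p := by field_simp
        nlinarith [mul_nonneg hC (by positivity : (0:ℝ) ≤ d₂ * E)]
      · -- log region, s ≤ u/2 < 1
        have hps : p = 1 + Real.log s := by rw [← hp, piN, if_pos hle]
        have hs0 : (0:ℝ) < s := lt_of_lt_of_le (by positivity) hle
        have hlogs : Real.log s ≤ 0 := Real.log_nonpos hs0.le (by linarith)
        have hp1 : p ≤ 1 := by rw [hps]; linarith
        rcases le_or_gt p 0 with hpneg | hppos
        · have habs : |p| = -p := abs_of_nonpos hpneg
          rw [habs, hd2]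
          have key : (2/u) * (p * (s - u)) ≥ -p := by
            have h1 : p * (s - u) = (-p) * (u - s) := by ring
            rw [h1]
            have h2 : (-p) * (u - s) ≥ (-p) * (u/2) :=
              mul_le_mul_of_nonneg_left hsu (by linarith)
            calc (2/u) * ((-p) * (u - s)) ≥ (2/u) * ((-p) * (u/2)) := by
                  apply mul_le_mul_of_nonneg_left h2 (by positivity)
            _ = -p := by field_simp
          nlinarith [mul_nonneg hC (by positivity : (0:ℝ) ≤ d₂ * E)]
        · have habs : |p| = p := abs_of_nonneg hppos.le
          rw [habs, hd2]
          -- p ≤ 1, u - s ≤ u, so (2/u) * p * (u - s) ≤ 2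
          have husu : u - s ≤ u := by linarith
          have key : (2/u) * (p * (s - u)) ≥ -2 := by
            have h1 : p * (u - s) ≤ 1 * u := by
              apply mul_le_mul hp1 husu (by linarith) (by norm_num)
            have h2 : (2/u) * (p * (u - s)) ≤ (2/u) * (1 * u) :=
              mul_le_mul_of_nonneg_left h1 (by positivity)
            have h3 : (2/u) * (1 * u) = 2 := by field_simp
            nlinarith
          nlinarith [mul_nonneg hC (by positivity : (0:ℝ) ≤ d₂ * E)]
    · -- u/2 < s < E : bounded region
      have hle : 1 / (N:ℝ) ≤ s := by linarith
      have hps : p = 1 + Real.log s := by rw [← hp, piN, if_pos hle]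
      have hs0 : (0:ℝ) < s := by linarith [hu0]
      have hlogup : Real.log s ≤ 1 := by
        have := Real.log_le_log hs0 hA.le
        rw [Real.log_exp] at this
        linarith
      have hloglo : -L ≤ Real.log s := by
        have h1 : Real.log (u/2) ≤ Real.log s :=
          Real.log_le_log (by positivity) (by linarith)
        have h2 : Real.log (u/2) = -L := by
          rw [hLdef, hd2, ← Real.log_inv, inv_div]
        linarith
      have hpup : p ≤ C := by rw [hps, hCdef]; linarith
      have hplo : -C ≤ p := by rw [hps, hCdef]; linarith
      have hsu1 : s - u ≤ E := by linarith
      have hsu2 : -E ≤ s - u := by linarith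
      have key : p * (s - u) ≥ -(C * E) := by
        nlinarith [mul_nonneg (by linarith : (0:ℝ) ≤ C + p) (by linarith : (0:ℝ) ≤ E + (s-u)),
          mul_nonneg (by linarith : (0:ℝ) ≤ C - p) (by linarith : (0:ℝ) ≤ E - (s-u))]
      have habs : |p| ≤ C := abs_le.mpr ⟨hplo, hpup⟩
      have hk2 : d₂ * (p * (s - u)) ≥ -(d₂ * (C * E)) := by
        have := mul_le_mul_of_nonneg_left key hd2pos.le
        linarith
      nlinarith
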